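/- Let n ≥ 1, let Q₁, …, Q_n be pairwise distinct real numbers and A₁, …, A_n arbitrary real numbers. Set Φ_m = Σ_{l≠m} (A_m − A_l)/(Q_m − Q_l) and R_j = Σ_{l≠j} 1/(Q_j − Q_l). Then for every index k: Σ_{j≠k} (1/(Q_k − Q_j)) · [ (Φ_k − Φ_j − (A_k − A_j)·R_j)/(Q_k − Q_j) + Σ_{l≠j} (A_j − A_l)/(Q_j − Q_l)² ] = 0. -/

import Mathlib

open scoped BigOperators

private lemma aux_sum_lin {ι : Type*} (t : Finset ι) (f1 f2 f3 f4 : ι → ℝ) (c d : ℝ) :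
    ∑ l ∈ t, (1 / d) * ((f1 l - f2 l - c * f3 l) / d + f4 l)
      = (1 / d) * (((∑ l ∈ t, f1 l) - (∑ l ∈ t, f2 l) - c * (∑ l ∈ t, f3 l)) / d
          + ∑ l ∈ t, f4 l) := by
  classical
  induction t using Finset.induction with
  | empty => simp
  | insert _ _ h ih =>
    rw [Finset.sum_insert h, Finset.sum_insert h, Finset.sum_insert h, Finset.sum_insert h,
      Finset.sum_insert h, ih]
    ring

/-- Appendix A identity: for pairwise distinct `Q_j` and arbitrary
`A_j`, with `Φ_m = Σ_{l≠m} (A_m - A_l)/(Q_m - Q_l)` and `R_j = Σ_{l≠j} 1/(Q_j - Q_l)`,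
the sum appearing in (A11) vanishes. -/
theorem appendix_A_sum_vanishes
    (n : ℕ) (hn : 1 ≤ n)
    (Q A : Fin n → ℝ)
    (hQd : ∀ i j : Fin n, i ≠ j → Q i ≠ Q j)
    (Φ R : Fin n → ℝ)
    (hΦ : ∀ m, Φ m = ∑ l ∈ Finset.univ.erase m, (A m - A l) / (Q m - Q l))
    (hR : ∀ j, R j = ∑ l ∈ Finset.univ.erase j, 1 / (Q j - Q l)) :
    ∀ k : Fin n,
      ∑ j ∈ Finset.univ.erase k,
        (1 / (Q k - Q j))
          * ((Φ k - Φ j - (A k - A j) * R j) / (Q k - Q j)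
            + ∑ l ∈ Finset.univ.erase j, (A j - A l) / (Q j - Q l) ^ 2) = 0 := by
  intro k
  classical
  have hne : ∀ i j : Fin n, i ≠ j → Q i - Q j ≠ 0 := fun i j h => sub_ne_zero.mpr (hQd i j h)
  set s : Finset (Fin n) := Finset.univ.erase k with hs
  set F : Fin n → Fin n → ℝ := fun j l =>
    if j = l then 0 else
      (1 / (Q k - Q j)) *
        (((A k - A l) / (Q k - Q l) - (A k - A l) / (Q j - Q l)) / (Q k - Q j)
          + (A j - A l) / (Q j - Q l) ^ 2) with hF
  have hFdef : ∀ j l, j ≠ l → F j l =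
      (1 / (Q k - Q j)) *
        (((A k - A l) / (Q k - Q l) - (A k - A l) / (Q j - Q l)) / (Q k - Q j)
          + (A j - A l) / (Q j - Q l) ^ 2) := fun j l h => by simp [hF, h]
  have hFdiag : ∀ j, F j j = 0 := fun j => by simp [hF]
  have hanti : ∀ j ∈ s, ∀ l ∈ s, F j l + F l j = 0 := by
    intro j hj l hl
    by_cases h : j = l
    · subst h; simp [hFdiag]
    · have hjk : j ≠ k := Finset.ne_of_mem_erase hj
      have hlk : l ≠ k := Finset.ne_of_mem_erase hl
      rw [hFdef j l h, hFdef l j (Ne.symm h)]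
      have h1 : Q k - Q j ≠ 0 := hne k j (Ne.symm hjk)
      have h2 : Q k - Q l ≠ 0 := hne k l (Ne.symm hlk)
      have h3 : Q j - Q l ≠ 0 := hne j l h
      have h4 : Q l - Q j ≠ 0 := hne l j (Ne.symm h)
      field_simp
      ring
  have hmain : ∀ j ∈ s, (1 / (Q k - Q j))
          * ((Φ k - Φ j - (A k - A j) * R j) / (Q k - Q j)
            + ∑ l ∈ Finset.univ.erase j, (A j - A l) / (Q j - Q l) ^ 2)
        = ∑ l ∈ s, F j l := by
    intro j hj
    have hjk : j ≠ k := Finset.ne_of_mem_erase hj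
    have hkj : k ≠ j := hjk.symm
    have hdk : Q k - Q j ≠ 0 := hne k j hkj
    have hdj : Q j - Q k ≠ 0 := hne j k hjk
    have hkmem : k ∈ Finset.univ.erase j := Finset.mem_erase.mpr ⟨hkj, Finset.mem_univ k⟩
    have et : (Finset.univ.erase j).erase k = s.erase j := by
      rw [Finset.erase_right_comm, ← hs]
    have e1 : Φ k = (A k - A j) / (Q k - Q j)
        + ∑ l ∈ s.erase j, (A k - A l) / (Q k - Q l) := by
      rw [hΦ k, ← hs, ← Finset.add_sum_erase _ _ hj]
    have e2 : Φ j = (A j - A k) / (Q j - Q k)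
        + ∑ l ∈ s.erase j, (A j - A l) / (Q j - Q l) := by
      rw [hΦ j, ← Finset.add_sum_erase _ _ hkmem, et]
    have e3 : R j = 1 / (Q j - Q k) + ∑ l ∈ s.erase j, 1 / (Q j - Q l) := by
      rw [hR j, ← Finset.add_sum_erase _ _ hkmem, et]
    have e4 : ∑ l ∈ Finset.univ.erase j, (A j - A l) / (Q j - Q l) ^ 2
        = (A j - A k) / (Q j - Q k) ^ 2 + ∑ l ∈ s.erase j, (A j - A l) / (Q j - Q l) ^ 2 := by
      rw [← Finset.add_sum_erase _ _ hkmem, et]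
    have e5 : ∑ l ∈ s, F j l = ∑ l ∈ s.erase j, F j l := (Finset.sum_erase _ (hFdiag j)).symm
    have hpt : ∀ l ∈ s.erase j, F j l
        = (1 / (Q k - Q j)) * (((A k - A l) / (Q k - Q l) - (A j - A l) / (Q j - Q l)
            - (A k - A j) * (1 / (Q j - Q l))) / (Q k - Q j)
            + (A j - A l) / (Q j - Q l) ^ 2) := by
      intro l hl
      have hjl : j ≠ l := (Finset.ne_of_mem_erase hl).symm
      rw [hFdef j l hjl]
      ring
    have e6 : ∑ l ∈ s.erase j, F j l
        = (1 / (Q k - Q j)) * (((∑ l ∈ s.erase j, (A k - A l) / (Q k - Q l))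
            - (∑ l ∈ s.erase j, (A j - A l) / (Q j - Q l))
            - (A k - A j) * ∑ l ∈ s.erase j, 1 / (Q j - Q l)) / (Q k - Q j)
            + ∑ l ∈ s.erase j, (A j - A l) / (Q j - Q l) ^ 2) := by
      rw [Finset.sum_congr rfl hpt, aux_sum_lin]
    rw [e5, e6, e1, e2, e3, e4]
    generalize (∑ l ∈ s.erase j, (A k - A l) / (Q k - Q l)) = S1
    generalize (∑ l ∈ s.erase j, (A j - A l) / (Q j - Q l)) = S2
    generalize (∑ l ∈ s.erase j, (1 : ℝ) / (Q j - Q l)) = S3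
    generalize (∑ l ∈ s.erase j, (A j - A l) / (Q j - Q l) ^ 2) = S4
    field_simp
    ring
  rw [Finset.sum_congr rfl hmain]
  have hswap : ∑ j ∈ s, ∑ l ∈ s, F j l = ∑ j ∈ s, ∑ l ∈ s, F l j := Finset.sum_comm
  have hzero : (∑ j ∈ s, ∑ l ∈ s, F j l) + (∑ j ∈ s, ∑ l ∈ s, F j l) = 0 := by
    nth_rewrite 2 [hswap]
    rw [← Finset.sum_add_distrib]
    have : ∀ j ∈ s, (∑ l ∈ s, F j l) + (∑ l ∈ s, F l j) = 0 := by
      intro j hj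
      rw [← Finset.sum_add_distrib]
      exact Finset.sum_eq_zero fun l hl => hanti j hj l hl
    rw [Finset.sum_congr rfl this, Finset.sum_const, smul_zero]
  linarith
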